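/- arXiv:0704.1673 — 2 statements merged into one kernel-verified Lean document; each statement's English description precedes it below -/
import Mathlib

section
/- Let n be a positive even integer and let P be a symmetric n×n real matrix. Define the four-index array R : Fin n → Fin n → Fin n → Fin n → ℝ by R i j k l = P i k · δ j l − P i l · δ j k − P j k · δ i l + P j l · δ i k, where δ denotes the Kronecker delta. Then the double alternating sum over all pairs of permutations σ, τ of Fin n, Σ_{σ,τ} sign(σ)·sign(τ)·∏_{m=0}^{n/2−1} R (σ(2m)) (σ(2m+1)) (τ(2m)) (τ(2m+1)), equals 2^n · ((n/2)!)² · σ_{n/2}(P), where σ_{n/2}(P) denotes the sum over all subsets S of Fin n of cardinality n/2 of the determinants of the principal submatrices of P with rows and columns indexed by S. -/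
/-- The curvature-type four-index array built from a matrix `P` and the
Kronecker delta: `R i j k l = P i k δ_{jl} − P i l δ_{jk} − P j k δ_{il} + P j l δ_{ik}`. -/
def kroneckerCurvature {n : ℕ} (P : Matrix (Fin n) (Fin n) ℝ)
    (i j k l : Fin n) : ℝ :=
  P i k * (if j = l then (1:ℝ) else 0) - P i l * (if j = k then (1:ℝ) else 0)
    - P j k * (if i = l then (1:ℝ) else 0) + P j l * (if i = k then (1:ℝ) else 0)

/-- `σ_k(A)`: the sum of the principal `k × k` minors of the matrix `A`. -/
def principalMinorSum {n : ℕ} (k : ℕ) (A : Matrix (Fin n) (Fin n) ℝ) : ℝ :=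
  ∑ S ∈ Finset.powersetCard k (Finset.univ : Finset (Fin n)),
    Matrix.det (fun i j : S => A i.1 j.1)

namespace PfaffAux

open Equiv Finset

variable {n : ℕ}

lemma ev_lt (n : ℕ) (m : Fin (n/2)) : 2*m.1 < n := by have := m.2; omega

lemma od_lt (n : ℕ) (m : Fin (n/2)) : 2*m.1+1 < n := by have := m.2; omega

/-- even-slot position -/
def ev (n : ℕ) (m : Fin (n/2)) : Fin n := ⟨2*m.1, ev_lt n m⟩
/-- odd-slot position -/
def od (n : ℕ) (m : Fin (n/2)) : Fin n := ⟨2*m.1+1, od_lt n m⟩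

lemma ev_ne_od (m m' : Fin (n/2)) : ev n m ≠ od n m' := by
  simp [ev, od, Fin.ext_iff]; omega

lemma ev_inj : Function.Injective (ev n) := by
  intro a b h; have := Fin.ext_iff.mp h; simp [ev] at this
  exact Fin.ext_iff.mpr (by omega)

lemma od_inj : Function.Injective (od n) := by
  intro a b h; have := Fin.ext_iff.mp h; simp [od] at this
  exact Fin.ext_iff.mpr (by omega)

/-- the sign of a permutation as a real number -/
def sg (σ : Equiv.Perm (Fin n)) : ℝ := ((Equiv.Perm.sign σ : ℤ) : ℝ)

lemma sg_mul (σ τ : Equiv.Perm (Fin n)) : sg (σ * τ) = sg σ * sg τ := by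
  simp [sg]

lemma sg_swap {a b : Fin n} (h : a ≠ b) : sg (Equiv.swap a b) = -1 := by
  simp [sg, Equiv.Perm.sign_swap h]

lemma sg_sq (σ : Equiv.Perm (Fin n)) : sg σ * sg σ = 1 := by
  unfold sg; rcases Int.units_eq_one_or (Equiv.Perm.sign σ) with h | h <;> simp [h]

/-- `P`-times-delta factor -/
def pd (P : Matrix (Fin n) (Fin n) ℝ) (σ τ : Equiv.Perm (Fin n)) (m : Fin (n/2)) : ℝ :=
  P (σ (ev n m)) (τ (ev n m)) * (if σ (od n m) = τ (od n m) then (1:ℝ) else 0)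

/-- curvature factor -/
def rc (P : Matrix (Fin n) (Fin n) ℝ) (σ τ : Equiv.Perm (Fin n)) (m : Fin (n/2)) : ℝ :=
  kroneckerCurvature P (σ (ev n m)) (σ (od n m)) (τ (ev n m)) (τ (od n m))

/-- partially averaged sum -/
def SS (P : Matrix (Fin n) (Fin n) ℝ) (A : Finset (Fin (n/2))) : ℝ :=
  ∑ σ : Equiv.Perm (Fin n), ∑ τ : Equiv.Perm (Fin n),
    sg σ * sg τ * ((∏ m ∈ A, pd P σ τ m) * ∏ m ∈ Aᶜ, rc P σ τ m)

lemma sum_reindex_swap {a b : Fin n} (hab : a ≠ b) (g : Equiv.Perm (Fin n) → ℝ) :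
    ∑ τ : Equiv.Perm (Fin n), sg τ * g τ
    = -∑ τ : Equiv.Perm (Fin n), sg τ * g (τ * Equiv.swap a b) := by
  rw [← Finset.sum_neg_distrib]
  refine Fintype.sum_equiv (Equiv.mulRight (Equiv.swap a b)) _ _ ?_
  intro τ
  simp only [Equiv.coe_mulRight]
  have h1 : τ * Equiv.swap a b * Equiv.swap a b = τ := by
    rw [mul_assoc, Equiv.swap_mul_self, mul_one]
  rw [h1, sg_mul, sg_swap hab]
  ring

lemma flip_tau {a b : Fin n} (hab : a ≠ b) (F : Equiv.Perm (Fin n) → Equiv.Perm (Fin n) → ℝ) :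
    (∑ σ : Equiv.Perm (Fin n), ∑ τ : Equiv.Perm (Fin n), sg σ * sg τ * F σ τ)
    = -∑ σ : Equiv.Perm (Fin n), ∑ τ : Equiv.Perm (Fin n),
        sg σ * sg τ * F σ (τ * Equiv.swap a b) := by
  rw [← Finset.sum_neg_distrib]
  refine Finset.sum_congr rfl fun σ _ => ?_
  have h1 : ∑ τ : Equiv.Perm (Fin n), sg σ * sg τ * F σ τ
      = ∑ τ : Equiv.Perm (Fin n), sg τ * (sg σ * F σ τ) := by
    refine Finset.sum_congr rfl fun τ _ => by ring
  rw [h1, sum_reindex_swap hab (fun τ => sg σ * F σ τ), neg_inj]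
  exact Finset.sum_congr rfl fun τ _ => by ring

lemma flip_sigma {a b : Fin n} (hab : a ≠ b) (F : Equiv.Perm (Fin n) → Equiv.Perm (Fin n) → ℝ) :
    (∑ σ : Equiv.Perm (Fin n), ∑ τ : Equiv.Perm (Fin n), sg σ * sg τ * F σ τ)
    = -∑ σ : Equiv.Perm (Fin n), ∑ τ : Equiv.Perm (Fin n),
        sg σ * sg τ * F (σ * Equiv.swap a b) τ := by
  have h1 : ∀ σ : Equiv.Perm (Fin n), ∑ τ : Equiv.Perm (Fin n), sg σ * sg τ * F σ τ
      = sg σ * ∑ τ : Equiv.Perm (Fin n), sg τ * F σ τ := by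
    intro σ; rw [Finset.mul_sum]; exact Finset.sum_congr rfl fun τ _ => by ring
  simp only [h1]
  rw [sum_reindex_swap hab (fun σ => ∑ τ : Equiv.Perm (Fin n), sg τ * F σ τ), neg_inj]
  refine Finset.sum_congr rfl fun σ _ => ?_
  rw [Finset.mul_sum]
  exact Finset.sum_congr rfl fun τ _ => by ring

lemma step (P : Matrix (Fin n) (Fin n) ℝ) (a b : Fin n) (hab : a ≠ b)
    (f : Equiv.Perm (Fin n) → Equiv.Perm (Fin n) → ℝ)
    (hfσ : ∀ σ τ, f (σ * Equiv.swap a b) τ = f σ τ)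
    (hfτ : ∀ σ τ, f σ (τ * Equiv.swap a b) = f σ τ) :
    (∑ σ : Equiv.Perm (Fin n), ∑ τ : Equiv.Perm (Fin n),
      sg σ * sg τ * (f σ τ * kroneckerCurvature P (σ a) (σ b) (τ a) (τ b)))
    = 4 * ∑ σ : Equiv.Perm (Fin n), ∑ τ : Equiv.Perm (Fin n),
      sg σ * sg τ * (f σ τ * (P (σ a) (τ a) * (if σ b = τ b then (1:ℝ) else 0))) := by
  have swapa : ∀ τ : Equiv.Perm (Fin n), (τ * Equiv.swap a b) a = τ b := by
    intro τ; simp [Equiv.Perm.mul_apply]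
  have swapb : ∀ τ : Equiv.Perm (Fin n), (τ * Equiv.swap a b) b = τ a := by
    intro τ; simp [Equiv.Perm.mul_apply]
  have hB : (∑ σ : Equiv.Perm (Fin n), ∑ τ : Equiv.Perm (Fin n),
        sg σ * sg τ * (f σ τ * (P (σ a) (τ b) * (if σ b = τ a then (1:ℝ) else 0))))
      = -∑ σ : Equiv.Perm (Fin n), ∑ τ : Equiv.Perm (Fin n),
        sg σ * sg τ * (f σ τ * (P (σ a) (τ a) * (if σ b = τ b then (1:ℝ) else 0))) := by
    refine (flip_tau hab _).trans ?_
    rw [neg_inj]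
    refine Finset.sum_congr rfl fun σ _ => Finset.sum_congr rfl fun τ _ => ?_
    simp only [swapa, swapb, hfτ]
  have hC : (∑ σ : Equiv.Perm (Fin n), ∑ τ : Equiv.Perm (Fin n),
        sg σ * sg τ * (f σ τ * (P (σ b) (τ a) * (if σ a = τ b then (1:ℝ) else 0))))
      = -∑ σ : Equiv.Perm (Fin n), ∑ τ : Equiv.Perm (Fin n),
        sg σ * sg τ * (f σ τ * (P (σ a) (τ a) * (if σ b = τ b then (1:ℝ) else 0))) := by
    refine (flip_sigma hab _).trans ?_
    rw [neg_inj]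
    refine Finset.sum_congr rfl fun σ _ => Finset.sum_congr rfl fun τ _ => ?_
    simp only [swapa, swapb, hfσ]
  have hD : (∑ σ : Equiv.Perm (Fin n), ∑ τ : Equiv.Perm (Fin n),
        sg σ * sg τ * (f σ τ * (P (σ b) (τ b) * (if σ a = τ a then (1:ℝ) else 0))))
      = ∑ σ : Equiv.Perm (Fin n), ∑ τ : Equiv.Perm (Fin n),
        sg σ * sg τ * (f σ τ * (P (σ a) (τ a) * (if σ b = τ b then (1:ℝ) else 0))) := by
    refine (flip_tau hab _).trans ?_
    have : (∑ σ : Equiv.Perm (Fin n), ∑ τ : Equiv.Perm (Fin n),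
        sg σ * sg τ * (f σ (τ * Equiv.swap a b) *
          (P (σ b) ((τ * Equiv.swap a b) b) * (if σ a = (τ * Equiv.swap a b) a then (1:ℝ) else 0))))
        = ∑ σ : Equiv.Perm (Fin n), ∑ τ : Equiv.Perm (Fin n),
        sg σ * sg τ * (f σ τ * (P (σ b) (τ a) * (if σ a = τ b then (1:ℝ) else 0))) := by
      refine Finset.sum_congr rfl fun σ _ => Finset.sum_congr rfl fun τ _ => ?_
      simp only [swapa, swapb, hfτ]
    rw [this, hC, neg_neg]
  have expand : ∀ σ τ : Equiv.Perm (Fin n),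
      sg σ * sg τ * (f σ τ * kroneckerCurvature P (σ a) (σ b) (τ a) (τ b))
      = sg σ * sg τ * (f σ τ * (P (σ a) (τ a) * (if σ b = τ b then (1:ℝ) else 0)))
        - sg σ * sg τ * (f σ τ * (P (σ a) (τ b) * (if σ b = τ a then (1:ℝ) else 0)))
        - sg σ * sg τ * (f σ τ * (P (σ b) (τ a) * (if σ a = τ b then (1:ℝ) else 0)))
        + sg σ * sg τ * (f σ τ * (P (σ b) (τ b) * (if σ a = τ a then (1:ℝ) else 0))) := by
    intro σ τ; simp only [kroneckerCurvature]; ring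
  calc (∑ σ : Equiv.Perm (Fin n), ∑ τ : Equiv.Perm (Fin n),
      sg σ * sg τ * (f σ τ * kroneckerCurvature P (σ a) (σ b) (τ a) (τ b)))
      = (∑ σ : Equiv.Perm (Fin n), ∑ τ : Equiv.Perm (Fin n),
          sg σ * sg τ * (f σ τ * (P (σ a) (τ a) * (if σ b = τ b then (1:ℝ) else 0))))
        - (∑ σ : Equiv.Perm (Fin n), ∑ τ : Equiv.Perm (Fin n),
          sg σ * sg τ * (f σ τ * (P (σ a) (τ b) * (if σ b = τ a then (1:ℝ) else 0))))
        - (∑ σ : Equiv.Perm (Fin n), ∑ τ : Equiv.Perm (Fin n),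
          sg σ * sg τ * (f σ τ * (P (σ b) (τ a) * (if σ a = τ b then (1:ℝ) else 0))))
        + (∑ σ : Equiv.Perm (Fin n), ∑ τ : Equiv.Perm (Fin n),
          sg σ * sg τ * (f σ τ * (P (σ b) (τ b) * (if σ a = τ a then (1:ℝ) else 0)))) := by
        simp only [expand, Finset.sum_add_distrib, Finset.sum_sub_distrib]
    _ = 4 * ∑ σ : Equiv.Perm (Fin n), ∑ τ : Equiv.Perm (Fin n),
        sg σ * sg τ * (f σ τ * (P (σ a) (τ a) * (if σ b = τ b then (1:ℝ) else 0))) := by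
        rw [hB, hC, hD]; ring

lemma SS_insert (P : Matrix (Fin n) (Fin n) ℝ) (A : Finset (Fin (n/2))) (m : Fin (n/2))
    (hm : m ∉ A) : SS P A = 4 * SS P (insert m A) := by
  classical
  have hmc : m ∈ Aᶜ := Finset.mem_compl.mpr hm
  have swap_inv : ∀ (σ : Equiv.Perm (Fin n)) (x : Fin n), x ≠ ev n m → x ≠ od n m →
      (σ * Equiv.swap (ev n m) (od n m)) x = σ x := by
    intro σ x h1 h2
    simp [Equiv.Perm.mul_apply, Equiv.swap_apply_of_ne_of_ne h1 h2]
  have pd_inv : ∀ (σ τ : Equiv.Perm (Fin n)) (m' : Fin (n/2)), m' ≠ m →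
      (pd P (σ * Equiv.swap (ev n m) (od n m)) τ m' = pd P σ τ m'
       ∧ pd P σ (τ * Equiv.swap (ev n m) (od n m)) m' = pd P σ τ m'
       ∧ rc P (σ * Equiv.swap (ev n m) (od n m)) τ m' = rc P σ τ m'
       ∧ rc P σ (τ * Equiv.swap (ev n m) (od n m)) m' = rc P σ τ m') := by
    intro σ τ m' hne
    have e1 : ev n m' ≠ ev n m := fun h => hne (ev_inj h)
    have e2 : ev n m' ≠ od n m := ev_ne_od m' m
    have e3 : od n m' ≠ ev n m := (ev_ne_od m m').symm
    have e4 : od n m' ≠ od n m := fun h => hne (od_inj h)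
    refine ⟨?_, ?_, ?_, ?_⟩ <;>
      simp [pd, rc, swap_inv _ _ e1 e2, swap_inv _ _ e3 e4]
  set f : Equiv.Perm (Fin n) → Equiv.Perm (Fin n) → ℝ := fun σ τ =>
    (∏ m' ∈ A, pd P σ τ m') * ∏ m' ∈ (insert m A)ᶜ, rc P σ τ m' with hf
  have hfσ : ∀ σ τ, f (σ * Equiv.swap (ev n m) (od n m)) τ = f σ τ := by
    intro σ τ
    simp only [hf]
    congr 1
    · exact Finset.prod_congr rfl fun m' hm' => (pd_inv σ τ m' (by rintro rfl; exact hm hm')).1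
    · refine Finset.prod_congr rfl fun m' hm' => ?_
      have hne : m' ≠ m := by
        rintro rfl; exact (Finset.mem_compl.mp hm') (Finset.mem_insert_self _ _)
      exact (pd_inv σ τ m' hne).2.2.1
  have hfτ : ∀ σ τ, f σ (τ * Equiv.swap (ev n m) (od n m)) = f σ τ := by
    intro σ τ
    simp only [hf]
    congr 1
    · exact Finset.prod_congr rfl fun m' hm' => (pd_inv σ τ m' (by rintro rfl; exact hm hm')).2.1
    · refine Finset.prod_congr rfl fun m' hm' => ?_
      have hne : m' ≠ m := by
        rintro rfl; exact (Finset.mem_compl.mp hm') (Finset.mem_insert_self _ _)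
      exact (pd_inv σ τ m' hne).2.2.2
  have key := step P (ev n m) (od n m) (ev_ne_od m m) f hfσ hfτ
  calc SS P A
      = ∑ σ : Equiv.Perm (Fin n), ∑ τ : Equiv.Perm (Fin n),
          sg σ * sg τ * (f σ τ * kroneckerCurvature P
            (σ (ev n m)) (σ (od n m)) (τ (ev n m)) (τ (od n m))) := by
        unfold SS
        refine Finset.sum_congr rfl fun σ _ => Finset.sum_congr rfl fun τ _ => ?_
        have hsplit : ∏ m' ∈ Aᶜ, rc P σ τ m'
            = rc P σ τ m * ∏ m' ∈ (insert m A)ᶜ, rc P σ τ m' := by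
          rw [Finset.compl_insert]
          exact (Finset.mul_prod_erase _ _ hmc).symm
        rw [hsplit]
        simp only [hf, rc]
        ring
    _ = 4 * ∑ σ : Equiv.Perm (Fin n), ∑ τ : Equiv.Perm (Fin n),
          sg σ * sg τ * (f σ τ * (P (σ (ev n m)) (τ (ev n m)) *
            (if σ (od n m) = τ (od n m) then (1:ℝ) else 0))) := key
    _ = 4 * SS P (insert m A) := by
        unfold SS
        congr 1
        refine Finset.sum_congr rfl fun σ _ => Finset.sum_congr rfl fun τ _ => ?_
        rw [Finset.prod_insert hm]
        simp only [hf, pd]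
        ring

lemma SS_all (P : Matrix (Fin n) (Fin n) ℝ) (A : Finset (Fin (n/2))) :
    SS P ∅ = 4 ^ A.card * SS P A := by
  classical
  induction A using Finset.induction_on with
  | empty => simp
  | @insert a A ha ih =>
      rw [ih, SS_insert P A a ha, Finset.card_insert_of_notMem ha]
      ring

lemma SS_empty (P : Matrix (Fin n) (Fin n) ℝ) :
    SS P ∅ = 4 ^ (n/2) * SS P Finset.univ := by
  have := SS_all P (Finset.univ : Finset (Fin (n/2)))
  simpa using this

/-- The equivalence between `Fin (n/2)` and even positions of `Fin n` (for even `n`). -/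
def evEquiv (hn2 : n % 2 = 0) : Fin (n/2) ≃ {x : Fin n // x.1 % 2 = 0} where
  toFun m := ⟨ev n m, by show (2*m.1) % 2 = 0; omega⟩
  invFun x := ⟨x.1.1 / 2, by have h1 := x.1.2; have h2 := x.2; omega⟩
  left_inv m := by
    apply Fin.ext
    simp [ev]
  right_inv x := by
    apply Subtype.ext
    apply Fin.ext
    have h1 := x.1.2
    have h2 := x.2
    simp [ev]
    omega

lemma evEquiv_coe (hn2 : n % 2 = 0) (m : Fin (n/2)) :
    ((evEquiv hn2 m : {x : Fin n // x.1 % 2 = 0}) : Fin n) = ev n m := rfl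

lemma od_not_even (m : Fin (n/2)) : ¬ ((od n m : Fin n).1 % 2 = 0) := by
  simp [od]

lemma inner_det (hn2 : n % 2 = 0) (P : Matrix (Fin n) (Fin n) ℝ) (σ : Equiv.Perm (Fin n)) :
    (∑ τ : Equiv.Perm (Fin n), sg σ * sg τ * ∏ m : Fin (n/2), pd P σ τ m)
    = Matrix.det (fun m m' : Fin (n/2) => P (σ (ev n m')) (σ (ev n m))) := by
  classical
  have hre : (∑ τ : Equiv.Perm (Fin n), sg σ * sg τ * ∏ m : Fin (n/2), pd P σ τ m)
      = ∑ ρ : Equiv.Perm (Fin n), sg σ * sg (σ * ρ) * ∏ m : Fin (n/2), pd P σ (σ * ρ) m := by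
    exact (Fintype.sum_equiv (Equiv.mulLeft σ)
      (fun ρ => sg σ * sg (σ * ρ) * ∏ m : Fin (n/2), pd P σ (σ * ρ) m)
      (fun τ => sg σ * sg τ * ∏ m : Fin (n/2), pd P σ τ m) (fun ρ => rfl)).symm
  rw [hre]
  have hterm : ∀ ρ : Equiv.Perm (Fin n),
      sg σ * sg (σ * ρ) * ∏ m : Fin (n/2), pd P σ (σ * ρ) m
      = (if (∀ m : Fin (n/2), ρ (od n m) = od n m) then
          sg ρ * ∏ m : Fin (n/2), P (σ (ev n m)) (σ (ρ (ev n m))) else 0) := by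
    intro ρ
    have hsg : sg σ * sg (σ * ρ) = sg ρ := by
      rw [sg_mul, ← mul_assoc, sg_sq, one_mul]
    have hpd : ∀ m : Fin (n/2), pd P σ (σ * ρ) m
        = P (σ (ev n m)) (σ (ρ (ev n m))) * (if ρ (od n m) = od n m then (1:ℝ) else 0) := by
      intro m
      simp only [pd, Equiv.Perm.mul_apply]
      congr 1
      by_cases h : ρ (od n m) = od n m
      · exact (if_pos (by rw [h])).trans (if_pos h).symm
      · exact (if_neg (fun hc => h (σ.injective hc).symm)).trans (if_neg h).symm
    rw [hsg]
    simp only [hpd]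
    rw [Finset.prod_mul_distrib, Finset.prod_boole]
    by_cases h : ∀ m : Fin (n/2), ρ (od n m) = od n m
    · rw [if_pos (fun m _ => h m), if_pos h]
      ring
    · push_neg at h
      obtain ⟨m0, hm0⟩ := h
      rw [if_neg (by push_neg; exact ⟨m0, Finset.mem_univ _, hm0⟩),
        if_neg (by push_neg; exact ⟨m0, hm0⟩)]
      ring
  simp only [hterm]
  rw [Finset.sum_ite, Finset.sum_const_zero, add_zero]
  have hbij : (∑ ρ ∈ Finset.filter (fun ρ : Equiv.Perm (Fin n) =>
        ∀ m : Fin (n/2), ρ (od n m) = od n m) Finset.univ,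
        sg ρ * ∏ m : Fin (n/2), P (σ (ev n m)) (σ (ρ (ev n m))))
      = ∑ π : Equiv.Perm (Fin (n/2)),
        sg π * ∏ m : Fin (n/2), P (σ (ev n m)) (σ (ev n (π m))) := by
    refine (Finset.sum_nbij (fun π : Equiv.Perm (Fin (n/2)) =>
      π.extendDomain (evEquiv hn2)) ?_ ?_ ?_ ?_).symm
    · intro π _
      simp only [Finset.mem_filter, Finset.mem_univ, true_and]
      intro m
      exact Equiv.Perm.extendDomain_apply_not_subtype _ _ (od_not_even m)
    · intro π1 _ π2 _ h
      exact Equiv.Perm.extendDomainHom_injective (evEquiv hn2) h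
    · intro ρ hρ
      simp only [Finset.coe_filter, Finset.mem_univ, true_and, Set.mem_setOf_eq] at hρ
      -- every odd point is fixed, so even points go to even points
      have hodd : ∀ x : Fin n, x.1 % 2 = 1 → ρ x = x := by
        intro x hx
        have : x = od n ⟨x.1 / 2, by have := x.2; omega⟩ := by
          apply Fin.ext; simp [od]; omega
        rw [this]; exact hρ _
      have hpres : ∀ x : Fin n, x.1 % 2 = 0 ↔ (ρ x).1 % 2 = 0 := by
        intro x
        constructor
        · intro hx
          by_contra hcon
          have h1 : (ρ x).1 % 2 = 1 := by omega
          have := hodd (ρ x) h1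
          have := ρ.injective this
          rw [← this] at hx
          omega
        · intro hx
          by_contra hcon
          have h1 : x.1 % 2 = 1 := by omega
          rw [hodd x h1] at hx
          omega
      refine ⟨(evEquiv hn2).permCongr.symm (ρ.subtypePerm (fun x => (hpres x).symm)),
        Finset.mem_coe.mpr (Finset.mem_univ _), ?_⟩
      apply Equiv.ext
      intro x
      show Equiv.Perm.extendDomain ((evEquiv hn2).permCongr.symm (ρ.subtypePerm (fun x => (hpres x).symm)))
        (evEquiv hn2) x = ρ x
      by_cases hx : x.1 % 2 = 0
      · have hx' : x = ((evEquiv hn2) ((evEquiv hn2).symm ⟨x, hx⟩) : {y : Fin n // y.1 % 2 = 0}) := by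
          simp
        rw [hx']
        rw [Equiv.Perm.extendDomain_apply_image]
        simp [Equiv.permCongr_apply, Equiv.Perm.subtypePerm]
      · exact (Equiv.Perm.extendDomain_apply_not_subtype _ (evEquiv hn2) hx).trans
          (hodd x (by omega)).symm
    · intro π _
      have h1 : sg (π.extendDomain (evEquiv hn2)) = sg π := by
        simp [sg, Equiv.Perm.sign_extendDomain]
      rw [h1]
      congr 1
      refine Finset.prod_congr rfl fun m _ => ?_
      congr 2
      exact (Equiv.Perm.extendDomain_apply_image π (evEquiv hn2) m).symm
  rw [hbij]; refine Eq.trans ?_ (Matrix.det_apply _).symm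
  refine Finset.sum_congr rfl fun π _ => ?_
  simp [sg, Units.smul_def, zsmul_eq_mul]

/-- image of the even slots under σ -/
def gS (σ : Equiv.Perm (Fin n)) : Finset (Fin n) :=
  Finset.image (fun m => σ (ev n m)) Finset.univ

lemma sev_inj (σ : Equiv.Perm (Fin n)) :
    Function.Injective (fun m : Fin (n/2) => σ (ev n m)) :=
  fun _ _ h => ev_inj (σ.injective h)

lemma gS_card (σ : Equiv.Perm (Fin n)) : (gS σ).card = n/2 := by
  rw [gS, Finset.card_image_of_injective _ (sev_inj σ), Finset.card_univ, Fintype.card_fin]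

lemma det_minor (P : Matrix (Fin n) (Fin n) ℝ) (σ : Equiv.Perm (Fin n)) :
    Matrix.det (fun m m' : Fin (n/2) => P (σ (ev n m')) (σ (ev n m)))
    = Matrix.det (fun i j : (gS σ : Finset (Fin n)) => P i.1 j.1) := by
  classical
  have hmem : ∀ m : Fin (n/2), σ (ev n m) ∈ gS σ :=
    fun m => Finset.mem_image_of_mem _ (Finset.mem_univ m)
  have hbij : Function.Bijective (fun m : Fin (n/2) => (⟨σ (ev n m), hmem m⟩ : {x // x ∈ gS σ})) := by
    constructor
    · intro m m' h
      exact sev_inj σ (congrArg Subtype.val h)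
    · rintro ⟨x, hx⟩
      obtain ⟨m, _, hm⟩ := Finset.mem_image.mp hx
      exact ⟨m, Subtype.ext hm⟩
  let e : Fin (n/2) ≃ {x // x ∈ gS σ} := Equiv.ofBijective _ hbij
  have hM : (fun m m' : Fin (n/2) => P (σ (ev n m')) (σ (ev n m)))
      = Matrix.transpose (Matrix.submatrix
          (fun i j : (gS σ : Finset (Fin n)) => P i.1 j.1) ⇑e ⇑e) := by
    funext m m'
    rfl
  rw [hM, Matrix.det_transpose]; exact Matrix.det_submatrix_equiv_self e _

section Counting

/-- parity decomposition of `Fin n` -/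
def parEquiv (hn2 : n % 2 = 0) : Fin n ≃ Fin (n/2) ⊕ Fin (n/2) where
  toFun x := if h : x.1 % 2 = 0 then Sum.inl ⟨x.1/2, by have := x.2; omega⟩
    else Sum.inr ⟨x.1/2, by have := x.2; omega⟩
  invFun y := Sum.elim (ev n) (od n) y
  left_inv x := by
    by_cases h : x.1 % 2 = 0
    · simp only [dif_pos h, Sum.elim_inl]
      apply Fin.ext; show 2 * (x.1/2) = x.1; omega
    · simp only [dif_neg h, Sum.elim_inr]
      apply Fin.ext; show 2 * (x.1/2) + 1 = x.1; omega
  right_inv y := by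
    rcases y with m | m
    · simp only [Sum.elim_inl]
      refine (dif_pos (show (ev n m).1 % 2 = 0 by show 2*m.1 % 2 = 0; omega)).trans ?_
      congr 1; apply Fin.ext; show 2*m.1/2 = m.1; omega
    · simp only [Sum.elim_inr]
      refine (dif_neg (show ¬ ((od n m).1 % 2 = 0) by show ¬((2*m.1+1) % 2 = 0); omega)).trans ?_
      congr 1; apply Fin.ext; show (2*m.1+1)/2 = m.1; omega

lemma parEquiv_ev (hn2 : n % 2 = 0) (m : Fin (n/2)) : (parEquiv hn2).symm (Sum.inl m) = ev n m := rfl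
lemma parEquiv_od (hn2 : n % 2 = 0) (m : Fin (n/2)) : (parEquiv hn2).symm (Sum.inr m) = od n m := rfl

/-- building a permutation from bijections onto `S` and `Sᶜ` -/
def buildPerm (hn2 : n % 2 = 0) (S : Finset (Fin n)) (u : Fin (n/2) ≃ {x // x ∈ S}) (v : Fin (n/2) ≃ {x // x ∈ Sᶜ}) :
    Equiv.Perm (Fin n) :=
  (parEquiv hn2).trans ((Equiv.sumCongr u v).trans
    ((Equiv.sumCongr (Equiv.refl {x // x ∈ S})
      (Equiv.subtypeEquivRight (fun x => Finset.mem_compl))).trans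
      (Equiv.sumCompl (fun x => x ∈ S))))

lemma buildPerm_ev (hn2 : n % 2 = 0) (S : Finset (Fin n)) (u : Fin (n/2) ≃ {x // x ∈ S}) (v : Fin (n/2) ≃ {x // x ∈ Sᶜ})
    (m : Fin (n/2)) : buildPerm hn2 S u v (ev n m) = (u m : Fin n) := by
  have h : parEquiv hn2 (ev n m) = Sum.inl m := by
    rw [← parEquiv_ev hn2 m, Equiv.apply_symm_apply]
  simp [buildPerm, h]

lemma buildPerm_od (hn2 : n % 2 = 0) (S : Finset (Fin n)) (u : Fin (n/2) ≃ {x // x ∈ S}) (v : Fin (n/2) ≃ {x // x ∈ Sᶜ})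
    (m : Fin (n/2)) : buildPerm hn2 S u v (od n m) = (v m : Fin n) := by
  have h : parEquiv hn2 (od n m) = Sum.inr m := by
    rw [← parEquiv_od hn2 m, Equiv.apply_symm_apply]
  simp [buildPerm, h]

lemma buildPerm_gS (hn2 : n % 2 = 0) (S : Finset (Fin n)) (u : Fin (n/2) ≃ {x // x ∈ S}) (v : Fin (n/2) ≃ {x // x ∈ Sᶜ}) :
    gS (buildPerm hn2 S u v) = S := by
  ext x
  simp only [gS, Finset.mem_image, Finset.mem_univ, true_and]
  constructor
  · rintro ⟨m, rfl⟩
    rw [buildPerm_ev]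
    exact (u m).2
  · intro hx
    exact ⟨u.symm ⟨x, hx⟩, by rw [buildPerm_ev, Equiv.apply_symm_apply]⟩

lemma fiber_card (hn2 : n % 2 = 0) (S : Finset (Fin n)) (hS : S.card = n/2) :
    (Finset.filter (fun σ : Equiv.Perm (Fin n) => gS σ = S) Finset.univ).card
    = (n/2).factorial * (n/2).factorial := by
  classical
  have hcardS : Fintype.card {x // x ∈ S} = n/2 := by
    rw [Fintype.card_coe, hS]
  have hcardSc : Fintype.card {x // x ∈ Sᶜ} = n/2 := by
    rw [Fintype.card_coe, Finset.card_compl, hS, Fintype.card_fin]; omega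
  have hmain : Function.Bijective (fun uv : (Fin (n/2) ≃ {x // x ∈ S}) × (Fin (n/2) ≃ {x // x ∈ Sᶜ}) =>
      (⟨buildPerm hn2 S uv.1 uv.2, buildPerm_gS hn2 S uv.1 uv.2⟩ :
        {σ : Equiv.Perm (Fin n) // gS σ = S})) := by
    constructor
    · rintro ⟨u, v⟩ ⟨u', v'⟩ h
      have h' : buildPerm hn2 S u v = buildPerm hn2 S u' v' := congrArg Subtype.val h
      have hu : u = u' := by
        apply Equiv.ext; intro m
        apply Subtype.ext
        rw [← buildPerm_ev hn2 S u v m, ← buildPerm_ev hn2 S u' v' m, h']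
      have hv : v = v' := by
        apply Equiv.ext; intro m
        apply Subtype.ext
        rw [← buildPerm_od hn2 S u v m, ← buildPerm_od hn2 S u' v' m, h']
      rw [hu, hv]
    · rintro ⟨σ, hσ⟩
      have hSmem : ∀ m : Fin (n/2), σ (ev n m) ∈ S := by
        intro m; rw [← hσ]; exact Finset.mem_image_of_mem _ (Finset.mem_univ m)
      have hScmem : ∀ m : Fin (n/2), σ (od n m) ∈ Sᶜ := by
        intro m
        rw [Finset.mem_compl, ← hσ]
        intro hc
        obtain ⟨m', _, hm'⟩ := Finset.mem_image.mp hc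
        exact ev_ne_od m' m (σ.injective hm')
      have hubij : Function.Bijective (fun m : Fin (n/2) =>
          (⟨σ (ev n m), hSmem m⟩ : {x // x ∈ S})) := by
        rw [Fintype.bijective_iff_injective_and_card]
        refine ⟨fun m m' h => sev_inj σ (congrArg Subtype.val h), by
          rw [hcardS, Fintype.card_fin]⟩
      have hvbij : Function.Bijective (fun m : Fin (n/2) =>
          (⟨σ (od n m), hScmem m⟩ : {x // x ∈ Sᶜ})) := by
        rw [Fintype.bijective_iff_injective_and_card]
        refine ⟨fun m m' h => od_inj (σ.injective (congrArg Subtype.val h)), by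
          rw [hcardSc, Fintype.card_fin]⟩
      refine ⟨⟨Equiv.ofBijective _ hubij, Equiv.ofBijective _ hvbij⟩, ?_⟩
      apply Subtype.ext
      apply Equiv.ext
      intro x
      rcases (parEquiv hn2).symm.surjective x with ⟨y, rfl⟩
      rcases y with m | m
      · rw [parEquiv_ev, buildPerm_ev]
        rfl
      · rw [parEquiv_od, buildPerm_od]
        rfl
  have hcard := Fintype.card_of_bijective hmain
  rw [Fintype.card_prod] at hcard
  have h1 : Fintype.card (Fin (n/2) ≃ {x // x ∈ S}) = (n/2).factorial := by
    rw [Fintype.card_equiv ((Fintype.equivFinOfCardEq hcardS).symm), Fintype.card_fin]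
  have h2 : Fintype.card (Fin (n/2) ≃ {x // x ∈ Sᶜ}) = (n/2).factorial := by
    rw [Fintype.card_equiv ((Fintype.equivFinOfCardEq hcardSc).symm), Fintype.card_fin]
  rw [h1, h2] at hcard
  rw [← Fintype.card_subtype (fun σ : Equiv.Perm (Fin n) => gS σ = S), ← hcard]

end Counting

end PfaffAux

theorem pfaffian_eq_esymm (n : ℕ) (hn : 0 < n) (hne : Even n)
    (P : Matrix (Fin n) (Fin n) ℝ) (hP : P.IsSymm) :
    (∑ σ : Equiv.Perm (Fin n), ∑ τ : Equiv.Perm (Fin n),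
      ((Equiv.Perm.sign σ : ℤ) : ℝ) * ((Equiv.Perm.sign τ : ℤ) : ℝ) *
        ∏ m : Fin (n / 2),
          kroneckerCurvature P
            (σ ⟨2 * m.1, by have := m.2; omega⟩)
            (σ ⟨2 * m.1 + 1, by have := m.2; omega⟩)
            (τ ⟨2 * m.1, by have := m.2; omega⟩)
            (τ ⟨2 * m.1 + 1, by have := m.2; omega⟩)) =
      2 ^ n * ((n / 2).factorial : ℝ) ^ 2 * principalMinorSum (n / 2) P := by
  classical
  have hn2 : n % 2 = 0 := Nat.even_iff.mp hne
  have h0 : (∑ σ : Equiv.Perm (Fin n), ∑ τ : Equiv.Perm (Fin n),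
      ((Equiv.Perm.sign σ : ℤ) : ℝ) * ((Equiv.Perm.sign τ : ℤ) : ℝ) *
        ∏ m : Fin (n / 2),
          kroneckerCurvature P
            (σ ⟨2 * m.1, by have := m.2; omega⟩)
            (σ ⟨2 * m.1 + 1, by have := m.2; omega⟩)
            (τ ⟨2 * m.1, by have := m.2; omega⟩)
            (τ ⟨2 * m.1 + 1, by have := m.2; omega⟩))
      = PfaffAux.SS P ∅ := by
    unfold PfaffAux.SS
    simp only [Finset.prod_empty, one_mul, Finset.compl_empty]
    rfl
  have h1 : PfaffAux.SS P Finset.univ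
      = ∑ σ : Equiv.Perm (Fin n),
          Matrix.det (fun i j : (PfaffAux.gS σ : Finset (Fin n)) => P i.1 j.1) := by
    unfold PfaffAux.SS
    refine Finset.sum_congr rfl fun σ _ => ?_
    rw [← PfaffAux.det_minor P σ, ← PfaffAux.inner_det hn2 P σ]
    refine Finset.sum_congr rfl fun τ _ => ?_
    simp only [Finset.compl_univ, Finset.prod_empty, mul_one]
  have h2 : (∑ σ : Equiv.Perm (Fin n),
        Matrix.det (fun i j : (PfaffAux.gS σ : Finset (Fin n)) => P i.1 j.1))
      = ((n / 2).factorial : ℝ) ^ 2 * principalMinorSum (n / 2) P := by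
    have hmaps : ∀ σ : Equiv.Perm (Fin n), σ ∈ (Finset.univ : Finset (Equiv.Perm (Fin n))) →
        PfaffAux.gS σ ∈ Finset.powersetCard (n/2) (Finset.univ : Finset (Fin n)) :=
      fun σ _ => Finset.mem_powersetCard_univ.mpr (PfaffAux.gS_card σ)
    rw [← Finset.sum_fiberwise_of_maps_to hmaps
      (fun σ : Equiv.Perm (Fin n) =>
        Matrix.det (fun i j : (PfaffAux.gS σ : Finset (Fin n)) => P i.1 j.1))]
    rw [principalMinorSum, Finset.mul_sum]
    refine Finset.sum_congr rfl fun S hS => ?_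
    have hcard : S.card = n / 2 := (Finset.mem_powersetCard_univ.mp hS)
    have hconst : ∀ σ ∈ Finset.filter (fun σ : Equiv.Perm (Fin n) => PfaffAux.gS σ = S)
        Finset.univ,
        Matrix.det (fun i j : (PfaffAux.gS σ : Finset (Fin n)) => P i.1 j.1)
        = Matrix.det (fun i j : (S : Finset (Fin n)) => P i.1 j.1) := by
      intro σ hσ
      have h := (Finset.mem_filter.mp hσ).2
      revert h
      generalize PfaffAux.gS σ = T
      rintro rfl
      rfl
    rw [Finset.sum_congr rfl hconst, Finset.sum_const,
      PfaffAux.fiber_card hn2 S hcard, nsmul_eq_mul]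
    push_cast
    ring
  rw [h0, PfaffAux.SS_empty, h1, h2]
  have h4 : (4 : ℝ) ^ (n / 2) = 2 ^ n := by
    rw [(by norm_num : (4:ℝ) = 2^2), ← pow_mul]
    congr 1
    omega
  rw [h4]
  ring
end

section
/- Let n > 2, let g be a symmetric positive definite n×n real matrix and P a symmetric n×n real matrix, and for x ∈ ℝ set g_x := g − x²·P + (x⁴/4)·P·g⁻¹·P. Then for all x ∈ ℝ, det(g_x) / det(g) = ( Σ_{k=0}^{n} (−1/2)^k · σ_k(g⁻¹P) · x^{2k} )², where σ_k(A) denotes the sum over all subsets S of Fin n of cardinality k of the determinants of the principal submatrices of A with rows and columns indexed by S (with σ_0(A) = 1). In particular, writing det(g_x)/det(g) = Σ_j c_j x^{2j}, the coefficients c_j vanish for j > n. -/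
open Matrix Finset in
/-- The determinant of the matrix obtained from `M` by replacing the rows
outside `S` by the corresponding rows of the identity is the principal minor
of `M` indexed by `S`. -/
lemma det_piecewise_one {n : ℕ} (M : Matrix (Fin n) (Fin n) ℝ) (S : Finset (Fin n)) :
    Matrix.det (S.piecewise (fun i => M i) (fun i => (1 : Matrix (Fin n) (Fin n) ℝ) i)) =
      Matrix.det (fun i j : S => M i.1 j.1) := by
  classical
  set B : Matrix (Fin n) (Fin n) ℝ :=
    S.piecewise (fun i => M i) (fun i => (1 : Matrix (Fin n) (Fin n) ℝ) i) with hB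
  let e : {x // x ∈ S} ⊕ {x // x ∉ S} ≃ Fin n := Equiv.sumCompl (· ∈ S)
  have h1 : B.det = (B.submatrix e e).det := (Matrix.det_submatrix_equiv_self e B).symm
  have h2 : B.submatrix e e =
      Matrix.fromBlocks (Matrix.of (fun i j : S => M i.1 j.1))
        (Matrix.of (fun (i : S) (j : {x // x ∉ S}) => M i.1 j.1)) 0 1 := by
    ext i j
    cases i with
    | inl i =>
      cases j with
      | inl j =>
        simp [Matrix.submatrix, e, B, Finset.piecewise_eq_of_mem _ _ _ i.2]
      | inr j =>
        simp [Matrix.submatrix, e, B, Finset.piecewise_eq_of_mem _ _ _ i.2]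
    | inr i =>
      cases j with
      | inl j =>
        have hij : (i.1 : Fin n) ≠ j.1 := by
          intro h
          exact i.2 (h ▸ j.2)
        simp [Matrix.submatrix, e, B, Finset.piecewise_eq_of_notMem _ _ _ i.2,
          Matrix.one_apply, hij]
      | inr j =>
        by_cases hij : (i.1 : Fin n) = j.1
        · have : i = j := Subtype.ext hij
          simp [Matrix.submatrix, e, B, Finset.piecewise_eq_of_notMem _ _ _ j.2,
            Matrix.one_apply, this]
        · have : i ≠ j := fun h => hij (congrArg Subtype.val h)
          simp [Matrix.submatrix, e, B, Finset.piecewise_eq_of_notMem _ _ _ i.2,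
            Matrix.one_apply, hij, this]
  rw [h1, h2, Matrix.det_fromBlocks_zero₂₁, Matrix.det_one, mul_one]
  rfl

open Matrix Finset in
/-- Expansion of `det (1 + t • M)` in terms of sums of principal minors. -/
lemma det_one_add_smul_eq_sum {n : ℕ} (t : ℝ) (M : Matrix (Fin n) (Fin n) ℝ) :
    (1 + t • M).det =
      ∑ k ∈ Finset.range (n + 1), principalMinorSum k M * t ^ k := by
  classical
  have key : (1 + t • M).det =
      ∑ S : Finset (Fin n), t ^ S.card * Matrix.det (fun i j : S => M i.1 j.1) := by
    have h0 : (1 + t • M).det =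
        (Matrix.detRowAlternating : AlternatingMap ℝ (Fin n → ℝ) ℝ (Fin n))
          (fun i => (t • M) i + (1 : Matrix (Fin n) (Fin n) ℝ) i) := by
      congr 1
      ext i j
      simp [Matrix.add_apply, add_comm]
    rw [h0]
    have := (Matrix.detRowAlternating :
        AlternatingMap ℝ (Fin n → ℝ) ℝ (Fin n)).toMultilinearMap.map_add_univ
      (fun i => (t • M) i) (fun i => (1 : Matrix (Fin n) (Fin n) ℝ) i)
    simp only [AlternatingMap.coe_multilinearMap] at this
    rw [show (fun i => (t • M) i + (1 : Matrix (Fin n) (Fin n) ℝ) i)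
        = (fun i => (t • M) i) + (fun i => (1 : Matrix (Fin n) (Fin n) ℝ) i) from rfl, this]
    refine Finset.sum_congr rfl fun S _ => ?_
    have hpw : S.piecewise (fun i => (t • M) i) (fun i => (1 : Matrix (Fin n) (Fin n) ℝ) i)
        = S.piecewise
            (fun i => t • (S.piecewise (fun i => M i)
              (fun i => (1 : Matrix (Fin n) (Fin n) ℝ) i)) i)
            (S.piecewise (fun i => M i) (fun i => (1 : Matrix (Fin n) (Fin n) ℝ) i)) := by
      ext i j
      by_cases hi : i ∈ S
      · simp [Finset.piecewise_eq_of_mem _ _ _ hi]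
      · simp [Finset.piecewise_eq_of_notMem _ _ _ hi]
    rw [hpw]
    have hsmul := (Matrix.detRowAlternating :
        AlternatingMap ℝ (Fin n → ℝ) ℝ (Fin n)).toMultilinearMap.map_piecewise_smul
      (fun _ => t)
      (S.piecewise (fun i => M i) (fun i => (1 : Matrix (Fin n) (Fin n) ℝ) i)) S
    simp only [AlternatingMap.coe_multilinearMap] at hsmul
    rw [hsmul, Finset.prod_const, smul_eq_mul]
    congr 1
    exact det_piecewise_one M S
  rw [key]
  have huniv : (Finset.univ : Finset (Finset (Fin n)))
      = (Finset.univ : Finset (Fin n)).powerset := (Finset.powerset_univ).symm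
  rw [huniv, Finset.sum_powerset]
  rw [Finset.card_univ, Fintype.card_fin]
  refine Finset.sum_congr rfl fun k _ => ?_
  rw [principalMinorSum, Finset.sum_mul]
  refine Finset.sum_congr rfl fun S hS => ?_
  rw [(Finset.mem_powersetCard.1 hS).2]
  ring

theorem det_poincare_expansion (n : ℕ) (hn : 2 < n)
    (g P : Matrix (Fin n) (Fin n) ℝ) (hg : g.PosDef) (hgs : g.IsSymm)
    (hP : P.IsSymm) :
    ∀ x : ℝ,
      (g - x ^ 2 • P + (x ^ 4 / 4) • (P * g⁻¹ * P)).det / g.det =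
        (∑ k ∈ Finset.range (n + 1),
          (-(1:ℝ)/2) ^ k * principalMinorSum k (g⁻¹ * P) * x ^ (2 * k)) ^ 2 := by
  intro x
  classical
  have hginv : Invertible g := hg.isUnit.invertible
  have hgg : g * g⁻¹ = 1 := Matrix.mul_inv_of_invertible g
  set M : Matrix (Fin n) (Fin n) ℝ := g⁻¹ * P with hM
  set t : ℝ := -(x ^ 2) / 2 with ht
  -- factorization
  have hfact : g - x ^ 2 • P + (x ^ 4 / 4) • (P * g⁻¹ * P)
      = g * (1 + t • M) * (1 + t • M) := by
    have hgM : g * M = P := by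
      rw [hM, ← mul_assoc, hgg, one_mul]
    have hgMM : g * (M * M) = P * g⁻¹ * P := by
      rw [hM]
      calc g * (g⁻¹ * P * (g⁻¹ * P)) = (g * g⁻¹) * (P * g⁻¹ * P) := by
            noncomm_ring
        _ = P * g⁻¹ * P := by rw [hgg, one_mul]
    have expand : (1 + t • M) * (1 + t • M)
        = 1 + (2 * t) • M + (t * t) • (M * M) := by
      simp only [mul_add, add_mul, one_mul, mul_one, Matrix.smul_mul, Matrix.mul_smul,
        smul_smul]
      module
    rw [mul_assoc g _ _, expand]
    rw [mul_add, mul_add, mul_one, Matrix.mul_smul, Matrix.mul_smul, hgM, hgMM]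
    have h2t : (2 * t) = -(x ^ 2) := by rw [ht]; ring
    have htt : t * t = x ^ 4 / 4 := by rw [ht]; ring
    rw [h2t, htt]
    module
  rw [hfact, Matrix.det_mul, Matrix.det_mul]
  have hdg : g.det ≠ 0 := hg.det_pos.ne'
  rw [mul_assoc, mul_comm g.det, mul_div_assoc, div_self hdg, mul_one]
  rw [det_one_add_smul_eq_sum t M, ← pow_two]
  congr 1
  refine Finset.sum_congr rfl fun k _ => ?_
  have ht2 : t = (-(1:ℝ)/2) * x ^ 2 := by rw [ht]; ring
  rw [ht2, mul_pow, pow_mul]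
  ring
end
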